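/- Every involutive isometry of the lattice 2(−E8) = (−E8) ⊕ (−E8) that maps each standard basis vector to plus or minus a standard basis vector is one of the following six maps (writing elements as pairs (x₁,x₂) with x₁ in the first and x₂ in the second summand): (x₁,x₂) ↦ (x₁,x₂), (x₁,x₂) ↦ (−x₁,x₂), (x₁,x₂) ↦ (x₁,−x₂), (x₁,x₂) ↦ (−x₁,−x₂), (x₁,x₂) ↦ (x₂,x₁), and (x₁,x₂) ↦ (−x₂,−x₁). -/

import Mathlib

open Matrix

/-- The Gram matrix of the lattice `−E8`. -/
def GramE8 : Matrix (Fin 8) (Fin 8) ℤ :=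
  !![-2,0,1,0,0,0,0,0;
     0,-2,0,1,0,0,0,0;
     1,0,-2,1,0,0,0,0;
     0,1,1,-2,1,0,0,0;
     0,0,0,1,-2,1,0,0;
     0,0,0,0,1,-2,1,0;
     0,0,0,0,0,1,-2,1;
     0,0,0,0,0,0,1,-2]

/-- The Gram matrix of `2(−E8) = (−E8) ⊕ (−E8)`. -/
def Gram2E8 : Matrix (Fin 16) (Fin 16) ℤ :=
  Matrix.of fun i j =>
    if h : i.val < 8 then
      if h' : j.val < 8 then GramE8 ⟨i.val, h⟩ ⟨j.val, h'⟩ else 0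
    else
      if h' : j.val < 8 then 0
      else GramE8 ⟨i.val - 8, by have := i.isLt; omega⟩ ⟨j.val - 8, by have := j.isLt; omega⟩

/-- `M` is an isometry of the lattice `(ℤⁿ, G)`. -/
def IsIsometry {n : ℕ} (G M : Matrix (Fin n) (Fin n) ℤ) : Prop :=
  IsUnit M.det ∧ Mᵀ * G * M = G

/-- `M` maps each standard basis vector to plus or minus a standard basis vector. -/
def SignedBasis {n : ℕ} (M : Matrix (Fin n) (Fin n) ℤ) : Prop :=
  ∀ j : Fin n, ∃ i : Fin n, ∃ ε : ℤ, (ε = 1 ∨ ε = -1) ∧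
    M.mulVec (Pi.single j 1) = ε • Pi.single i 1

/-- The map `(x₁,x₂) ↦ (a·x₁, b·x₂)` on `2(−E8)` as a matrix. -/
def diag2E8 (a b : ℤ) : Matrix (Fin 16) (Fin 16) ℤ :=
  Matrix.of fun i j => if i = j then (if i.val < 8 then a else b) else 0

/-- The map `(x₁,x₂) ↦ (x₂,x₁)` on `2(−E8)` as a matrix. -/
def swap2E8 : Matrix (Fin 16) (Fin 16) ℤ :=
  Matrix.of fun i j => if i.val + 8 = j.val ∨ j.val + 8 = i.val then 1 else 0

/-! ### Auxiliary material -/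

/-- Adjacency of the doubled E8 Dynkin diagram, encoded as bits of one big number. -/
def adjB (j k : Fin 16) : Bool :=
  (28949126597169582957644522906284642743725745033618560886398722623187087523844 : ℕ).testBit
    (j.1 * 16 + k.1)

/-- The swap `j ↦ j + 8 (mod 16)` as a function. -/
def swF (j : Fin 16) : Fin 16 := ⟨(j.1 + 8) % 16, by omega⟩

lemma adjB_gram : ∀ j k : Fin 16, adjB j k = true → Gram2E8 j k = 1 := by
  intro j; fin_cases j <;> decide

lemma gram_adjB : ∀ j k : Fin 16, (Gram2E8 j k = 1 ∨ Gram2E8 j k = -1) → adjB j k = true := by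
  intro j; fin_cases j <;> decide

lemma gram_vals : ∀ j k : Fin 16, Gram2E8 j k = -2 ∨ Gram2E8 j k = 0 ∨ Gram2E8 j k = 1 := by
  intro j; fin_cases j <;> decide

lemma adjB_swF : ∀ j k : Fin 16, adjB (swF j) (swF k) = adjB j k := by decide

lemma swF_swF : ∀ j : Fin 16, swF (swF j) = j := by decide

set_option maxHeartbeats 4000000 in
lemma deg3_lemma : ∀ t a b c : Fin 16, adjB t a = true → adjB t b = true → adjB t c = true →
    a ≠ b → a ≠ c → b ≠ c → t = 3 ∨ t = 11 := by decide

lemma nbr3 : ∀ t : Fin 16, adjB t 3 = true → t = 1 ∨ t = 2 ∨ t = 4 := by decide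
lemma nbr1 : ∀ t : Fin 16, adjB t 1 = true → t = 3 := by decide
lemma nbr2 : ∀ t : Fin 16, adjB t 2 = true → t = 0 ∨ t = 3 := by decide
lemma nbr4 : ∀ t : Fin 16, adjB t 4 = true → t = 3 ∨ t = 5 := by decide
lemma nbr5 : ∀ t : Fin 16, adjB t 5 = true → t = 4 ∨ t = 6 := by decide
lemma nbr6 : ∀ t : Fin 16, adjB t 6 = true → t = 5 ∨ t = 7 := by decide
lemma nbr0 : ∀ t : Fin 16, adjB t 0 = true → t = 2 := by decide

lemma swap2E8_eq : ∀ i j : Fin 16, swap2E8 i j = if i = swF j then 1 else 0 := by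
  intro i; fin_cases i <;> decide

lemma forceFirst (f : Fin 16 → Fin 16) (hinj : Function.Injective f)
    (hfwd : ∀ j k, adjB j k = true → adjB (f j) (f k) = true)
    (hbwd : ∀ j k, adjB (f j) (f k) = true → adjB j k = true)
    (h3 : f 3 = 3) :
    f 0 = 0 ∧ f 1 = 1 ∧ f 2 = 2 ∧ f 4 = 4 ∧ f 5 = 5 ∧ f 6 = 6 ∧ f 7 = 7 := by
  have hsurj : Function.Surjective f := Finite.surjective_of_injective hinj
  have h13 : adjB (f 1) 3 = true := by have := hfwd 1 3 (by decide); rwa [h3] at this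
  have hf1 : f 1 = 1 := by
    rcases nbr3 _ h13 with h1 | h1 | h1
    · exact h1
    · exfalso
      obtain ⟨x, hx⟩ := hsurj 0
      have hx1 : adjB x 1 = true := hbwd x 1 (by rw [hx, h1]; decide)
      have hx3 := nbr1 x hx1; subst hx3
      rw [h3] at hx; exact absurd hx (by decide)
    · exfalso
      obtain ⟨x, hx⟩ := hsurj 5
      have hx1 : adjB x 1 = true := hbwd x 1 (by rw [hx, h1]; decide)
      have hx3 := nbr1 x hx1; subst hx3
      rw [h3] at hx; exact absurd hx (by decide)
  have h23 : adjB (f 2) 3 = true := by have := hfwd 2 3 (by decide); rwa [h3] at this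
  have hf2 : f 2 = 2 := by
    rcases nbr3 _ h23 with h2 | h2 | h2
    · exact absurd (hinj (h2.trans hf1.symm)) (by decide)
    · exact h2
    · exfalso
      obtain ⟨x, hx⟩ := hsurj 5
      have hx2 : adjB x 2 = true := hbwd x 2 (by rw [hx, h2]; decide)
      rcases nbr2 x hx2 with h | h
      · subst h
        have h43 : adjB (f 4) 3 = true := by have := hfwd 4 3 (by decide); rwa [h3] at this
        have hf4 : f 4 = 2 := by
          rcases nbr3 _ h43 with h4 | h4 | h4
          · exact absurd (hinj (h4.trans hf1.symm)) (by decide)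
          · exact h4
          · exact absurd (hinj (h4.trans h2.symm)) (by decide)
        have h54 : adjB (f 5) 2 = true := by have := hfwd 5 4 (by decide); rwa [hf4] at this
        rcases nbr2 _ h54 with h5 | h5
        · have h65 : adjB (f 6) 0 = true := by have := hfwd 6 5 (by decide); rwa [h5] at this
          have h62 := nbr0 _ h65
          exact absurd (hinj (h62.trans hf4.symm)) (by decide)
        · exact absurd (hinj (h5.trans h3.symm)) (by decide)
      · subst h
        rw [h3] at hx; exact absurd hx (by decide)
  have h43 : adjB (f 4) 3 = true := by have := hfwd 4 3 (by decide); rwa [h3] at this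
  have hf4 : f 4 = 4 := by
    rcases nbr3 _ h43 with h4 | h4 | h4
    · exact absurd (hinj (h4.trans hf1.symm)) (by decide)
    · exact absurd (hinj (h4.trans hf2.symm)) (by decide)
    · exact h4
  have h02 : adjB (f 0) 2 = true := by have := hfwd 0 2 (by decide); rwa [hf2] at this
  have hf0 : f 0 = 0 := by
    rcases nbr2 _ h02 with h0 | h0
    · exact h0
    · exact absurd (hinj (h0.trans h3.symm)) (by decide)
  have h54 : adjB (f 5) 4 = true := by have := hfwd 5 4 (by decide); rwa [hf4] at this
  have hf5 : f 5 = 5 := by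
    rcases nbr4 _ h54 with h5 | h5
    · exact absurd (hinj (h5.trans h3.symm)) (by decide)
    · exact h5
  have h65 : adjB (f 6) 5 = true := by have := hfwd 6 5 (by decide); rwa [hf5] at this
  have hf6 : f 6 = 6 := by
    rcases nbr5 _ h65 with h6 | h6
    · exact absurd (hinj (h6.trans hf4.symm)) (by decide)
    · exact h6
  have h76 : adjB (f 7) 6 = true := by have := hfwd 7 6 (by decide); rwa [hf6] at this
  have hf7 : f 7 = 7 := by
    rcases nbr6 _ h76 with h7 | h7
    · exact absurd (hinj (h7.trans hf5.symm)) (by decide)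
    · exact h7
  exact ⟨hf0, hf1, hf2, hf4, hf5, hf6, hf7⟩

lemma forceAll (f : Fin 16 → Fin 16) (hinj : Function.Injective f)
    (hfwd : ∀ j k, adjB j k = true → adjB (f j) (f k) = true)
    (hbwd : ∀ j k, adjB (f j) (f k) = true → adjB j k = true)
    (h3 : f 3 = 3) : ∀ j, f j = j := by
  obtain ⟨hf0, hf1, hf2, hf4, hf5, hf6, hf7⟩ := forceFirst f hinj hfwd hbwd h3
  have hf11 : f 11 = 11 := by
    have a1 := hfwd 11 9 (by decide)
    have a2 := hfwd 11 10 (by decide)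
    have a3 := hfwd 11 12 (by decide)
    rcases deg3_lemma (f 11) (f 9) (f 10) (f 12) a1 a2 a3
      (fun h => absurd (hinj h) (by decide)) (fun h => absurd (hinj h) (by decide))
      (fun h => absurd (hinj h) (by decide)) with h | h
    · exact absurd (h.trans h3.symm) (fun hh => absurd (hinj hh) (by decide))
    · exact h
  set g : Fin 16 → Fin 16 := fun j => swF (f (swF j)) with hg
  have hginj : Function.Injective g := by
    intro a b hab
    have h1 : f (swF a) = f (swF b) := by
      have := congrArg swF hab
      simpa [hg, swF_swF] using this
    have h2 := hinj h1
    have := congrArg swF h2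
    simpa [swF_swF] using this
  have hgfwd : ∀ j k, adjB j k = true → adjB (g j) (g k) = true := by
    intro j k h
    show adjB (swF (f (swF j))) (swF (f (swF k))) = true
    rw [adjB_swF]
    exact hfwd _ _ (by rw [adjB_swF]; exact h)
  have hgbwd : ∀ j k, adjB (g j) (g k) = true → adjB j k = true := by
    intro j k h
    rw [show g j = swF (f (swF j)) from rfl, show g k = swF (f (swF k)) from rfl,
      adjB_swF] at h
    have := hbwd _ _ h
    rwa [adjB_swF] at this
  have hg3 : g 3 = 3 := by
    show swF (f (swF 3)) = 3
    rw [show swF (3 : Fin 16) = 11 from by decide, hf11]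
    decide
  obtain ⟨g0, g1, g2, g4, g5, g6, g7⟩ := forceFirst g hginj hgfwd hgbwd hg3
  have T : ∀ j : Fin 16, g j = j → f (swF j) = swF j := by
    intro j h
    have h2 := congrArg swF h
    rw [show swF (g j) = swF (swF (f (swF j))) from rfl, swF_swF] at h2
    exact h2
  have hf8 : f 8 = 8 := by have := T 0 g0; rwa [show swF (0 : Fin 16) = 8 from by decide] at this
  have hf9 : f 9 = 9 := by have := T 1 g1; rwa [show swF (1 : Fin 16) = 9 from by decide] at this
  have hf10 : f 10 = 10 := by
    have := T 2 g2; rwa [show swF (2 : Fin 16) = 10 from by decide] at this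
  have hf12 : f 12 = 12 := by
    have := T 4 g4; rwa [show swF (4 : Fin 16) = 12 from by decide] at this
  have hf13 : f 13 = 13 := by
    have := T 5 g5; rwa [show swF (5 : Fin 16) = 13 from by decide] at this
  have hf14 : f 14 = 14 := by
    have := T 6 g6; rwa [show swF (6 : Fin 16) = 14 from by decide] at this
  have hf15 : f 15 = 15 := by
    have := T 7 g7; rwa [show swF (7 : Fin 16) = 15 from by decide] at this
  intro j
  fin_cases j <;> assumption

theorem stmt4 (M : Matrix (Fin 16) (Fin 16) ℤ)
    (hiso : IsIsometry Gram2E8 M) (hinv : M * M = 1) (hsb : SignedBasis M) :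
    M = 1 ∨ M = diag2E8 (-1) 1 ∨ M = diag2E8 1 (-1) ∨ M = -1 ∨
      M = swap2E8 ∨ M = -swap2E8 := by
  obtain ⟨-, hGiso⟩ := hiso
  choose σ ε hε hM using hsb
  have hcol : ∀ i j, M i j = if i = σ j then ε j else 0 := by
    intro i j
    have := congrFun (hM j) i
    simp [Matrix.mulVec_single, Pi.single_apply] at this
    simpa [eq_comm] using this
  have hMeq : M = Matrix.of (fun i j => if i = σ j then ε j else 0) :=
    Matrix.ext fun i j => hcol i j
  have hrel : ∀ j k, ε j * ε k * Gram2E8 (σ j) (σ k) = Gram2E8 j k := by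
    intro j k
    have h2 := congrFun (congrFun hGiso j) k
    rw [hMeq] at h2
    simp only [Matrix.mul_apply, Matrix.transpose_apply, Matrix.of_apply,
      ite_mul, mul_ite, zero_mul, mul_zero, Finset.sum_ite_eq, Finset.sum_ite_eq',
      Finset.mem_univ, if_true] at h2
    rw [← h2]; ring
  have hσσε : ∀ j, σ (σ j) = j ∧ ε (σ j) * ε j = 1 := by
    intro j
    have h2 := congrFun (congrFun hinv (σ (σ j))) j
    rw [hMeq] at h2
    simp only [Matrix.mul_apply, Matrix.of_apply, mul_ite, mul_zero,
      Finset.sum_ite_eq', Finset.mem_univ, if_true, Matrix.one_apply, if_pos rfl] at h2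
    by_cases h : σ (σ j) = j
    · refine ⟨h, ?_⟩
      rwa [if_pos h] at h2
    · exfalso
      rw [if_neg h] at h2
      rcases hε (σ j) with h1 | h1 <;> rcases hε j with h4 | h4 <;> simp [h1, h4] at h2
  have hσσ : ∀ j, σ (σ j) = j := fun j => (hσσε j).1
  have hinjσ : Function.Injective σ := Function.LeftInverse.injective hσσ
  have hfwd : ∀ j k, adjB j k = true → adjB (σ j) (σ k) = true := by
    intro j k h
    have h1 := adjB_gram j k h
    have h2 := hrel j k
    rw [h1] at h2
    apply gram_adjB
    rcases hε j with e1 | e1 <;> rcases hε k with e2 | e2 <;> rw [e1, e2] at h2 <;> omega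
  have hbwd : ∀ j k, adjB (σ j) (σ k) = true → adjB j k = true := by
    intro j k h
    have h1 := adjB_gram _ _ h
    have h2 := hrel j k
    rw [h1] at h2
    apply gram_adjB
    rcases hε j with e1 | e1 <;> rcases hε k with e2 | e2 <;> rw [e1, e2] at h2 <;> omega
  have heps : ∀ j k, adjB j k = true → ε j = ε k := by
    intro j k h
    have h1 := adjB_gram j k h
    have h2 := hrel j k
    rw [h1] at h2
    rcases gram_vals (σ j) (σ k) with hv | hv | hv <;> rw [hv] at h2 <;>
      rcases hε j with e1 | e1 <;> rcases hε k with e2 | e2 <;> rw [e1, e2] at h2 ⊢ <;> omega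
  have e0 : ε 0 = ε 2 := heps 0 2 (by decide)
  have e1 : ε 1 = ε 3 := heps 1 3 (by decide)
  have e2 : ε 2 = ε 3 := heps 2 3 (by decide)
  have e3 : ε 3 = ε 4 := heps 3 4 (by decide)
  have e4 : ε 4 = ε 5 := heps 4 5 (by decide)
  have e5 : ε 5 = ε 6 := heps 5 6 (by decide)
  have e6 : ε 6 = ε 7 := heps 6 7 (by decide)
  have e8 : ε 8 = ε 10 := heps 8 10 (by decide)
  have e9 : ε 9 = ε 11 := heps 9 11 (by decide)
  have e10 : ε 10 = ε 11 := heps 10 11 (by decide)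
  have e11 : ε 11 = ε 12 := heps 11 12 (by decide)
  have e12 : ε 12 = ε 13 := heps 12 13 (by decide)
  have e13 : ε 13 = ε 14 := heps 13 14 (by decide)
  have e14 : ε 14 = ε 15 := heps 14 15 (by decide)
  have hepsA : ∀ j : Fin 16, ε j = if j.1 < 8 then ε 0 else ε 8 := by
    intro j
    fin_cases j <;> simp <;> omega
  have a1 := hfwd 3 1 (by decide)
  have a2 := hfwd 3 2 (by decide)
  have a4 := hfwd 3 4 (by decide)
  rcases deg3_lemma (σ 3) (σ 1) (σ 2) (σ 4) a1 a2 a4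
      (fun h => absurd (hinjσ h) (by decide)) (fun h => absurd (hinjσ h) (by decide))
      (fun h => absurd (hinjσ h) (by decide)) with h3 | h3
  · -- identity case
    have hid : ∀ j, σ j = j := forceAll σ hinjσ hfwd hbwd h3
    rcases hε 0 with ha | ha <;> rcases hε 8 with hb | hb
    · left
      apply Matrix.ext; intro i j
      rw [hcol i j, hid j, Matrix.one_apply]
      by_cases h : i = j
      · subst h; simp [hepsA i, ha, hb]
      · rw [if_neg h, if_neg h]
    · right; right; left
      apply Matrix.ext; intro i j
      rw [hcol i j, hid j]
      simp only [diag2E8, Matrix.of_apply]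
      by_cases h : i = j
      · subst h; simp [hepsA i, ha, hb]
      · rw [if_neg h, if_neg h]
    · right; left
      apply Matrix.ext; intro i j
      rw [hcol i j, hid j]
      simp only [diag2E8, Matrix.of_apply]
      by_cases h : i = j
      · subst h; simp [hepsA i, ha, hb]
      · rw [if_neg h, if_neg h]
    · right; right; right; left
      apply Matrix.ext; intro i j
      rw [hcol i j, hid j]
      simp only [Matrix.neg_apply, Matrix.one_apply]
      by_cases h : i = j
      · subst h; simp [hepsA i, ha, hb]
      · rw [if_neg h, if_neg h]; rfl
  · -- swap case
    have hg3 : (fun j => swF (σ j)) 3 = 3 := by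
      show swF (σ 3) = 3
      rw [h3]; decide
    have hginj : Function.Injective (fun j => swF (σ j)) := by
      intro a b hab
      have h1 : swF (swF (σ a)) = swF (swF (σ b)) := congrArg swF hab
      rw [swF_swF, swF_swF] at h1
      exact hinjσ h1
    have hgfwd : ∀ j k, adjB j k = true → adjB (swF (σ j)) (swF (σ k)) = true := by
      intro j k h
      rw [adjB_swF]
      exact hfwd j k h
    have hgbwd : ∀ j k, adjB (swF (σ j)) (swF (σ k)) = true → adjB j k = true := by
      intro j k h
      rw [adjB_swF] at h
      exact hbwd j k h
    have hall := forceAll (fun j => swF (σ j)) hginj hgfwd hgbwd hg3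
    have hσsw : ∀ j, σ j = swF j := by
      intro j
      have := congrArg swF (hall j)
      rwa [show swF ((fun j => swF (σ j)) j) = swF (swF (σ j)) from rfl, swF_swF] at this
    have hε80 : ε 8 = ε 0 := by
      have h := (hσσε 0).2
      rw [hσsw 0, show swF (0 : Fin 16) = 8 from by decide] at h
      rcases hε 0 with e | e <;> rcases hε 8 with e' | e' <;> rw [e, e'] at h ⊢ <;> omega
    have hεall : ∀ j, ε j = ε 0 := by
      intro j
      rw [hepsA j]
      split_ifs
      · rfl
      · exact hε80
    rcases hε 0 with ha | ha
    · right; right; right; right; left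
      apply Matrix.ext; intro i j
      rw [hcol i j, hσsw j, swap2E8_eq, hεall j, ha]
    · right; right; right; right; right
      apply Matrix.ext; intro i j
      rw [hcol i j, hσsw j, Matrix.neg_apply, swap2E8_eq, hεall j, ha]
      split_ifs <;> norm_num
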